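/- The generating function A(x) = sum_{n>=2} a_n x^n for DAP counted by length equals (1 - x - x^2 - sqrt(x^4 - 2x^3 - x^2 - 2x + 1)) / (2x); equivalently A(x) satisfies x A(x)^2 + (x^2 + x - 1) A(x) + x^2 = 0 as formal power series. -/

import Mathlib

open PowerSeries

/-- A valid step sequence: each step is an up-step `1` or a down-step `-k` (`k ≥ 1`),
and no two down-steps are consecutive. -/
def GoodSteps (p : List ℤ) : Prop :=
  (∀ s ∈ p, s = 1 ∨ s ≤ -1) ∧ List.Chain' (fun a b => a = 1 ∨ b = 1) p

/-- A Dyck path with air pockets: nonempty, valid steps, ends on the x-axis,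
stays weakly above the x-axis. -/
def IsDAP (p : List ℤ) : Prop :=
  p ≠ [] ∧ GoodSteps p ∧ p.sum = 0 ∧ ∀ i, 0 ≤ (p.take i).sum

/-- A grand Dyck path with air pockets: valid steps, ends on the x-axis
(possibly going below it); the empty path is allowed. -/
def IsGDAP (p : List ℤ) : Prop := GoodSteps p ∧ p.sum = 0

/-- Number of DAP of length `n`. -/
noncomputable def dapCount (n : ℕ) : ℕ :=
  Nat.card {p : List ℤ // IsDAP p ∧ p.length = n}

/-- The ordinary generating function of DAP counted by length. -/
noncomputable def Aps : PowerSeries ℚ := PowerSeries.mk fun n => (dapCount n : ℚ)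

namespace DAPwork

lemma sum_le_length {l : List ℤ} (h : ∀ s ∈ l, s = 1 ∨ s ≤ -1) : l.sum ≤ l.length := by
  induction l with
  | nil => simp
  | cons a t ih =>
    have ha := h a (by simp)
    have := ih (fun s hs => h s (by simp [hs]))
    simp only [List.sum_cons, List.length_cons]
    push_cast
    have : a ≤ 1 := by rcases ha with h1 | h1 <;> omega
    omega

lemma head_one {p : List ℤ} (hp : IsDAP p) : ∃ t, p = 1 :: t := by
  obtain ⟨hne, ⟨hsteps, _⟩, _, hpre⟩ := hp
  obtain ⟨a, t, rfl⟩ := List.exists_cons_of_ne_nil hne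
  have h1 := hpre 1
  simp at h1
  rcases hsteps a (by simp) with h | h
  · exact ⟨t, by rw [h]⟩
  · omega

lemma last_neg {p : List ℤ} (hne : p ≠ []) (hsteps : ∀ s ∈ p, s = 1 ∨ s ≤ -1)
    (hsum : p.sum ≤ 0) (hpre : ∀ i, 0 ≤ (p.take i).sum) :
    ∃ q a, p = q ++ [a] ∧ a ≤ -1 := by
  rcases p.eq_nil_or_concat' with rfl | ⟨q, a, rfl⟩
  · exact absurd rfl hne
  refine ⟨q, a, rfl, ?_⟩
  rcases hsteps a (by simp) with h | h
  · exfalso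
    have hq := hpre q.length
    rw [List.take_append] at hq
    simp [h] at hq
    have : (q ++ [a]).sum = q.sum + a := by simp
    omega
  · exact h

lemma length_ge_two {p : List ℤ} (hp : IsDAP p) : 2 ≤ p.length := by
  obtain ⟨t, rfl⟩ := head_one hp
  obtain ⟨hne, ⟨hsteps, _⟩, hsum, hpre⟩ := hp
  rcases t with _ | ⟨b, t'⟩
  · simp at hsum
  · simp

lemma entry_mem {p : List ℤ} (hp : IsDAP p) {s : ℤ} (hs : s ∈ p) :
    -(p.length : ℤ) ≤ s ∧ s ≤ 1 := by
  obtain ⟨_, ⟨hsteps, _⟩, _, hpre⟩ := hp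
  constructor
  · obtain ⟨i, rfl⟩ := List.mem_iff_get.mp hs
    have h1 := List.sum_take_succ p i i.isLt
    have h2 := hpre ((i : ℕ) + 1)
    have h3 : (p.take i).sum ≤ (p.take i).length :=
      sum_le_length (fun t ht => hsteps t (List.mem_of_mem_take ht))
    have h4 : (p.take i).length ≤ p.length := by simp
    simp only [List.get_eq_getElem]
    push_cast at h3 ⊢
    omega
  · rcases hsteps s hs with h | h <;> omega

lemma finite_sub (n : ℕ) (S : Set (List ℤ)) (hS : ∀ p ∈ S, (p = [] ∨ IsDAP p) ∧ p.length = n) :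
    Finite S := by
  have hinj : Function.Injective (fun (p : S) (i : Fin n) =>
      (⟨p.1.getD i 0, by
        obtain ⟨hd, hlen⟩ := hS p.1 p.2
        have hi : (i : ℕ) < p.1.length := hlen ▸ i.isLt
        rw [List.getD_eq_getElem _ _ hi]
        rcases hd with h | h
        · simp [h] at hi
        · have := entry_mem h (p.1.getElem_mem hi)
          simp only [Finset.mem_Icc]
          omega⟩ : Finset.Icc (-(n:ℤ)) 1)) := by
    intro p q hpq
    have hlp := (hS p.1 p.2).2
    have hlq := (hS q.1 q.2).2
    apply Subtype.ext
    apply List.ext_getElem (by omega)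
    intro i hip hiq
    have := congrArg Subtype.val (congrFun hpq ⟨i, by omega⟩)
    simp only at this
    rwa [List.getD_eq_getElem _ _ hip, List.getD_eq_getElem _ _ hiq] at this
  exact Finite.of_injective _ hinj

instance finDap (n : ℕ) : Finite {p : List ℤ // IsDAP p ∧ p.length = n} :=
  finite_sub n _ (fun p hp => ⟨Or.inr hp.1, hp.2⟩)

instance finE (n : ℕ) : Finite {p : List ℤ // (p = [] ∨ IsDAP p) ∧ p.length = n} :=
  finite_sub n _ (fun p hp => hp)
lemma sum_take_append (l m : List ℤ) (i : ℕ) :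
    ((l ++ m).take i).sum = (l.take i).sum + (m.take (i - l.length)).sum := by
  rw [List.take_append, List.sum_append]

lemma take_all_of_ge {l : List ℤ} {i : ℕ} (h : l.length ≤ i) : l.take i = l :=
  List.take_of_length_le h

lemma dap_decomp {A : List ℤ} (hA : IsDAP A) : ∃ α a, A = 1 :: α ++ [a] ∧ a ≤ -1 := by
  obtain ⟨t, hA1⟩ := head_one hA
  obtain ⟨q, b, hqb, hb⟩ := last_neg hA.1 hA.2.1.1 (le_of_eq hA.2.2.1) hA.2.2.2
  rcases t.eq_nil_or_concat' with rfl | ⟨γ, a, rfl⟩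
  · rw [hA1] at hA
    have := hA.2.2.1
    simp at this
  · refine ⟨γ, a, by simpa using hA1, ?_⟩
    rw [hA1] at hqb
    have h0 : (1 :: γ) ++ [a] = q ++ [b] := by simpa using hqb
    obtain ⟨-, h2⟩ := List.append_inj' h0 (by simp)
    have : a = b := by simpa using h2
    omega

/-- prefix sums of `α` are nonneg when `α ++ [a]` is a DAP -/
lemma pre_nonneg {α : List ℤ} {a : ℤ} (hQ : IsDAP (α ++ [a])) (ha : a ≤ -1) (i : ℕ) :
    0 ≤ (α.take i).sum := by
  rcases le_or_gt i α.length with h | h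
  · have := hQ.2.2.2 i
    rwa [List.take_append_of_le_length h] at this
  · rw [take_all_of_ge h.le]
    have hsum := hQ.2.2.1
    simp at hsum
    omega

lemma encL_isDAP {β : List ℤ} (hβ : β = [] ∨ IsDAP β) : IsDAP (1 :: -1 :: β) := by
  have hpre : ∀ j, (0:ℤ) ≤ (β.take j).sum := by
    rcases hβ with rfl | h
    · simp
    · exact h.2.2.2
  have hsum : β.sum = 0 := by
    rcases hβ with rfl | h
    · simp
    · exact h.2.2.1
  refine ⟨by simp, ⟨?_, ?_⟩, by simp [hsum], ?_⟩
  · intro s hs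
    simp at hs
    rcases hs with rfl | rfl | hs
    · exact Or.inl rfl
    · exact Or.inr le_rfl
    · rcases hβ with rfl | h
      · simp at hs
      · exact h.2.1.1 s hs
  · rw [List.Chain', List.isChain_cons_cons]
    refine ⟨Or.inl rfl, ?_⟩
    rw [List.isChain_cons]
    refine ⟨?_, ?_⟩
    · intro y hy
      rcases hβ with rfl | h
      · simp at hy
      · obtain ⟨t, rfl⟩ := head_one h
        simp at hy
        exact Or.inr hy.symm
    · rcases hβ with rfl | h
      · simp
      · exact h.2.1.2
  · intro i
    rcases i with _ | _ | i
    · simp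
    · simp
    · simpa [List.take_succ_cons] using hpre i

lemma encR_isDAP {α β : List ℤ} {a : ℤ} (hQ : IsDAP (α ++ [a])) (ha : a ≤ -1)
    (hβ : β = [] ∨ IsDAP β) : IsDAP ((1 :: α) ++ (a - 1) :: β) := by
  have hpreβ : ∀ j, (0:ℤ) ≤ (β.take j).sum := by
    rcases hβ with rfl | h
    · simp
    · exact h.2.2.2
  have hsumβ : β.sum = 0 := by
    rcases hβ with rfl | h
    · simp
    · exact h.2.2.1
  have hsumQ : α.sum + a = 0 := by have := hQ.2.2.1; simpa using this
  have hpreα := pre_nonneg hQ ha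
  have hchainQ := hQ.2.1.2
  refine ⟨by simp, ⟨?_, ?_⟩, ?_, ?_⟩
  · intro s hs
    simp at hs
    rcases hs with rfl | hs | rfl | hs
    · exact Or.inl rfl
    · exact hQ.2.1.1 s (by simp [hs])
    · right; omega
    · rcases hβ with rfl | h
      · simp at hs
      · exact h.2.1.1 s hs
  · apply List.IsChain.append
    · rw [List.isChain_cons]
      exact ⟨fun y _ => Or.inl rfl, hchainQ.left_of_append⟩
    · rw [List.isChain_cons]
      refine ⟨?_, ?_⟩
      · intro y hy
        rcases hβ with rfl | h
        · simp at hy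
        · obtain ⟨t, rfl⟩ := head_one h
          simp at hy
          exact Or.inr hy.symm
      · rcases hβ with rfl | h
        · simp
        · exact h.2.1.2
    · intro x hx y hy
      simp at hy
      rcases α.eq_nil_or_concat' with rfl | ⟨γ, c, rfl⟩
      · simp at hx
        subst hx hy
        exact Or.inl rfl
      · rw [show (1 : ℤ) :: (γ ++ [c]) = (1 :: γ) ++ [c] by simp,
            List.getLast?_concat] at hx
        simp at hx
        have hlink := (List.isChain_append.mp hchainQ).2.2
        have hc := hlink c (by rw [List.getLast?_concat]; rfl) a (by simp)
        subst hx hy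
        rcases hc with h1 | h1
        · exact Or.inl h1
        · omega
  · simp
    omega
  · intro i
    rcases i with _ | i
    · simp
    · rw [List.cons_append, List.take_succ_cons, List.sum_cons, sum_take_append]
      rcases le_or_gt i α.length with h | h
      · have : i - α.length = 0 := by omega
        rw [this]
        simp
        have := hpreα i
        omega
      · obtain ⟨j, hj⟩ : ∃ j, i - α.length = j + 1 := ⟨i - α.length - 1, by omega⟩
        rw [hj, take_all_of_ge h.le, List.take_succ_cons, List.sum_cons]
        have := hpreβ j
        omega
abbrev Dap (n : ℕ) := {p : List ℤ // IsDAP p ∧ p.length = n}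
abbrev Emp (n : ℕ) := {p : List ℤ // (p = [] ∨ IsDAP p) ∧ p.length = n}
abbrev Pair (m : ℕ) := {qb : List ℤ × List ℤ //
  IsDAP qb.1 ∧ (qb.2 = [] ∨ IsDAP qb.2) ∧ qb.1.length + qb.2.length = m}

/-- the right encoding on lists -/
def elev (Q β : List ℤ) : List ℤ := (1 :: Q.dropLast) ++ (Q.getLastD 0 - 1) :: β

lemma elev_concat (α : List ℤ) (a : ℤ) (β : List ℤ) :
    elev (α ++ [a]) β = (1 :: α) ++ (a - 1) :: β := by
  simp [elev, List.dropLast_concat, List.getLastD_concat]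

lemma elev_isDAP {Q β : List ℤ} (hQ : IsDAP Q) (hβ : β = [] ∨ IsDAP β) :
    IsDAP (elev Q β) := by
  obtain ⟨α, a, hd, ha⟩ := dap_decomp hQ
  have h2 : Q = (1 :: α) ++ [a] := by simpa using hd
  rw [h2, elev_concat]
  exact encR_isDAP (h2 ▸ hQ) ha hβ

lemma elev_length {Q β : List ℤ} (hQ : IsDAP Q) :
    (elev Q β).length = Q.length + β.length + 1 := by
  obtain ⟨α, a, hd, _⟩ := dap_decomp hQ
  have h2 : Q = (1 :: α) ++ [a] := by simpa using hd
  rw [h2, elev_concat]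
  simp only [List.length_append, List.length_cons, List.length_nil]
  omega

lemma marker {u β : List ℤ} {a : ℤ} (hQ : IsDAP (u ++ [a])) :
    ((u ++ (a - 1) :: β).take (u.length + 1)).sum = -1 := by
  rw [sum_take_append, take_all_of_ge (by omega), show u.length + 1 - u.length = 1 by omega]
  have hs : u.sum + a = 0 := by
    have := hQ.2.2.1
    simp at this
    omega
  simp
  omega

lemma marker2 {u β : List ℤ} {a : ℤ} (hQ : IsDAP (u ++ [a])) (ha : a ≤ -1) {i : ℕ}
    (hi : i ≤ u.length) : 0 ≤ ((u ++ (a - 1) :: β).take i).sum := by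
  rw [sum_take_append, show i - u.length = 0 by omega]
  simpa using pre_nonneg hQ ha i

noncomputable def enc (n : ℕ) : Emp n ⊕ Pair (n + 1) → Dap (n + 2)
  | Sum.inl b => ⟨1 :: -1 :: b.1, encL_isDAP b.2.1, by have := b.2.2; simp; omega⟩
  | Sum.inr qb => ⟨elev qb.1.1 qb.1.2, elev_isDAP qb.2.1 qb.2.2.1, by
      have h1 := qb.2.2.2
      have h2 := elev_length (Q := qb.1.1) (β := qb.1.2) qb.2.1
      omega⟩

lemma enc_inj (n : ℕ) : Function.Injective (enc n) := by
  rintro (⟨β, hβ, hβl⟩ | ⟨⟨Q, β⟩, hQ, hβ, hl⟩) (⟨β', hβ', hβl'⟩ | ⟨⟨Q', β'⟩, hQ', hβ', hl'⟩) h <;>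
    simp only [enc, Subtype.mk.injEq] at h
  · simp at h
    simp [h]
  · -- L vs R : impossible
    exfalso
    obtain ⟨α, a, hd, ha⟩ := dap_decomp hQ'
    have h2 : Q' = (1 :: α) ++ [a] := by simpa using hd
    rw [h2, elev_concat] at h
    simp at h
  · exfalso
    obtain ⟨α, a, hd, ha⟩ := dap_decomp hQ
    have h2 : Q = (1 :: α) ++ [a] := by simpa using hd
    rw [h2, elev_concat] at h
    simp at h
  · -- R vs R
    obtain ⟨α, a, hd, ha⟩ := dap_decomp hQ
    obtain ⟨α', a', hd', ha'⟩ := dap_decomp hQ'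
    have h2 : Q = (1 :: α) ++ [a] := by simpa using hd
    have h2' : Q' = (1 :: α') ++ [a'] := by simpa using hd'
    rw [h2, elev_concat, h2', elev_concat] at h
    -- strip outer cons
    have h3 : (1 :: α) ++ (a - 1) :: β = (1 :: α') ++ (a' - 1) :: β' := by
      simpa using h
    have hQ2 := h2 ▸ hQ
    have hQ2' := h2' ▸ hQ'
    have hsum : (1 :: α).sum + a = 0 := by have := hQ2.2.2.1; simp at this ⊢; omega
    have hsum' : (1 :: α').sum + a' = 0 := by have := hQ2'.2.2.1; simp at this ⊢; omega
    -- lengths of the leading blocks agree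
    have hlen : (1 :: α).length = (1 :: α').length := by
      by_contra hne
      rcases lt_or_gt_of_ne hne with hlt | hlt
      · have e1 := marker (β := β) hQ2
        have e2 := marker2 (β := β') hQ2' ha' (i := (1 :: α).length + 1) (by omega)
        rw [h3] at e1
        omega
      · have e1 := marker (β := β') hQ2'
        have e2 := marker2 (β := β) hQ2 ha (i := (1 :: α').length + 1) (by omega)
        rw [← h3] at e1
        omega
    obtain ⟨e1, e2⟩ := List.append_inj h3 (by simpa using hlen)
    have : a = a' ∧ β = β' := by
      constructor
      · have := (List.cons.injEq _ _ _ _ ▸ e2).1; omega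
      · exact (List.cons.injEq _ _ _ _ ▸ e2).2
    obtain ⟨rfl, rfl⟩ := this
    have : α = α' := by simpa using e1
    subst this
    have : Q = Q' := by rw [h2, h2']
    simp [this]
lemma enc_surj (n : ℕ) : Function.Surjective (enc n) := by
  rintro ⟨P, hP, hPlen⟩
  classical
  have hex : ∃ i, 0 < i ∧ i ≤ P.length ∧ (P.take i).sum = 0 :=
    ⟨P.length, by omega, le_rfl, by rw [take_all_of_ge le_rfl]; exact hP.2.2.1⟩
  set r := Nat.find hex with hrdef
  obtain ⟨hr0, hrle, hrsum⟩ := Nat.find_spec hex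
  rw [← hrdef] at hr0 hrle hrsum
  have hmin : ∀ i, 0 < i → i < r → 1 ≤ (P.take i).sum := by
    intro i h1 h2
    have h3 := Nat.find_min hex h2
    push_neg at h3
    have h4 := h3 h1 (by omega)
    have h5 := hP.2.2.2 i
    omega
  obtain ⟨t, hPt⟩ := head_one hP
  have hr2 : 2 ≤ r := by
    by_contra hc
    have : r = 1 := by omega
    rw [this, hPt] at hrsum
    simp at hrsum
  set A := P.take r with hAdef
  set β := P.drop r with hβdef
  have hPsplit : A ++ β = P := List.take_append_drop r P
  have hAlen : A.length = r := by
    rw [hAdef, List.length_take]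
    omega
  have hβlen : β.length = n + 2 - r := by
    rw [hβdef, List.length_drop]
    omega
  have hsumA : A.sum = 0 := hrsum
  have hsumβ : β.sum = 0 := by
    have := congrArg List.sum hPsplit
    rw [List.sum_append] at this
    rw [hP.2.2.1] at this
    omega
  have hpreβ : ∀ i, 0 ≤ (β.take i).sum := by
    intro i
    have h1 := hP.2.2.2 (r + i)
    rw [List.take_add, List.sum_append] at h1
    rw [← hAdef, ← hβdef] at h1
    omega
  have hβ : β = [] ∨ IsDAP β := by
    rcases eq_or_ne β [] with hb | hb
    · exact Or.inl hb
    · refine Or.inr ⟨hb, ⟨?_, ?_⟩, hsumβ, hpreβ⟩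
      · intro s hs
        exact hP.2.1.1 s (List.mem_of_mem_drop hs)
      · have := hP.2.1.2
        rw [← hPsplit] at this
        exact this.right_of_append
  have hA : IsDAP A := by
    refine ⟨by rw [← List.length_pos_iff]; omega, ⟨?_, ?_⟩, hsumA, ?_⟩
    · intro s hs
      exact hP.2.1.1 s (List.mem_of_mem_take hs)
    · have := hP.2.1.2
      rw [← hPsplit] at this
      exact this.left_of_append
    · intro i
      rw [hAdef, List.take_take]
      exact hP.2.2.2 _
  rcases eq_or_lt_of_le hr2 with hr2' | hr3
  · -- r = 2 : A = [1, -1]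
    rcases t with _ | ⟨b, t'⟩
    · rw [hPt] at hPlen
      simp at hPlen
    have hA2 : A = [1, b] := by
      rw [hAdef, ← hr2', hPt]
      rfl
    have hb : b = -1 := by
      rw [hA2] at hsumA
      simp at hsumA
      omega
    have hβ2 : β = t' := by
      rw [hβdef, ← hr2', hPt]
      rfl
    refine ⟨Sum.inl ⟨β, hβ, by omega⟩, ?_⟩
    simp only [enc]
    apply Subtype.ext
    simp only
    rw [← hPsplit, hA2, hb]
    rfl
  · -- r ≥ 3
    obtain ⟨α, a, hAd, ha⟩ := dap_decomp hA
    have hαlen : α.length = r - 2 := by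
      have := congrArg List.length hAd
      rw [hAlen] at this
      simp at this
      omega
    have hαne : α ≠ [] := by
      rw [← List.length_pos_iff]
      omega
    have hsumα : 1 + α.sum + a = 0 := by
      rw [hAd] at hsumA
      simp at hsumA
      omega
    have htake : ∀ i, i ≤ α.length → (A.take (i + 1)) = 1 :: α.take i := by
      intro i hi
      rw [hAd, List.cons_append, List.take_succ_cons, List.take_append_of_le_length hi]
    have hpreα : ∀ i, i ≤ α.length → 0 ≤ (α.take i).sum := by
      intro i hi
      have h1 := hmin (i + 1) (by omega) (by omega)
      have h2 : P.take (i + 1) = A.take (i + 1) := by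
        rw [hAdef, List.take_take, min_eq_left (by omega)]
      rw [h2, htake i hi] at h1
      simp at h1
      omega
    have hpreα' : ∀ i, 0 ≤ (α.take i).sum := by
      intro i
      rcases le_or_gt i α.length with h | h
      · exact hpreα i h
      · rw [take_all_of_ge h.le]
        have := hpreα α.length le_rfl
        rwa [take_all_of_ge le_rfl] at this
    -- a ≤ -2
    have ha2 : a ≤ -2 := by
      by_contra hc
      have ha1 : a = -1 := by omega
      have hsumα0 : α.sum = 0 := by omega
      obtain ⟨γ, b, hγ, hb⟩ := last_neg hαne
        (fun s hs => hP.2.1.1 s (by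
          rw [← hPsplit, hAd]
          simp [hs]))
        (le_of_eq hsumα0) hpreα'
      -- chain of A gives b = 1 ∨ a = 1, both false
      have hch := hA.2.1.2
      rw [hAd, hγ] at hch
      have : List.Chain' (fun a b => a = 1 ∨ b = 1) (((1 :: γ) ++ [b]) ++ [a]) := by
        simpa using hch
      have hlink := (List.isChain_append.mp this).2.2 b (by rw [List.getLast?_concat]; rfl)
        a (by simp)
      rcases hlink with h1 | h1 <;> omega
    -- the last element of α is 1
    obtain ⟨γ, b, hγ, hb1⟩ : ∃ γ b, α = γ ++ [b] ∧ b = 1 := by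
      obtain ⟨γ, b, hγ⟩ : ∃ γ b, α = γ ++ [b] := by
        rcases α.eq_nil_or_concat' with h | h
        · exact absurd h hαne
        · exact h
      refine ⟨γ, b, hγ, ?_⟩
      have hch := hA.2.1.2
      rw [hAd, hγ] at hch
      have hch2 : List.Chain' (fun a b => a = 1 ∨ b = 1) (((1 :: γ) ++ [b]) ++ [a]) := by
        simpa using hch
      have hlink := (List.isChain_append.mp hch2).2.2 b (by rw [List.getLast?_concat]; rfl)
        a (by simp)
      rcases hlink with h1 | h1 <;> omega
    -- Q := α ++ [a + 1] is a DAP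
    have hchainα : List.Chain' (fun a b => a = 1 ∨ b = 1) α := by
      have hch := hA.2.1.2
      rw [hAd] at hch
      exact (List.isChain_cons.mp hch).2.left_of_append
    have hQ : IsDAP (α ++ [a + 1]) := by
      refine ⟨by simp, ⟨?_, ?_⟩, ?_, ?_⟩
      · intro s hs
        simp at hs
        rcases hs with hs | rfl
        · exact hP.2.1.1 s (by rw [← hPsplit, hAd]; simp [hs])
        · right; omega
      · apply List.IsChain.append hchainα (by simp)
        intro x hx y hy
        rw [hγ, List.getLast?_concat] at hx
        simp at hx hy
        subst hx hy
        exact Or.inl hb1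
      · rw [List.sum_append]
        simp
        omega
      · intro i
        rw [sum_take_append]
        rcases le_or_gt i α.length with h | h
        · rw [show i - α.length = 0 by omega]
          simpa using hpreα i h
        · rw [take_all_of_ge h.le, take_all_of_ge (by simp; omega)]
          simp
          omega
    refine ⟨Sum.inr ⟨(α ++ [a + 1], β), hQ, hβ, by simp; omega⟩, ?_⟩
    simp only [enc]
    apply Subtype.ext
    simp only
    rw [elev_concat, show a + 1 - 1 = a by ring, ← hPsplit, hAd]
    simp
noncomputable def eCount (n : ℕ) : ℕ := Nat.card (Emp n)

def ePair (m : ℕ) : Pair m ≃ Σ i : Fin (m + 1), Dap i × Emp (m - i) where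
  toFun x := ⟨⟨x.1.1.length, by have := x.2.2.2; omega⟩,
    ⟨x.1.1, x.2.1, rfl⟩, ⟨x.1.2, x.2.2.1, by
      show x.1.2.length = m - x.1.1.length
      have := x.2.2.2
      omega⟩⟩
  invFun y := ⟨(y.2.1.1, y.2.2.1), y.2.1.2.1, y.2.2.2.1, by
    show (y.2.1.1 : List ℤ).length + (y.2.2.1 : List ℤ).length = m
    have h1 := y.2.1.2.2
    have h2 := y.2.2.2.2
    have h3 := y.1.isLt
    omega⟩
  left_inv x := rfl
  right_inv := by
    rintro ⟨⟨i, hi⟩, ⟨Q, hQ, hQl⟩, ⟨β, hβ, hβl⟩⟩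
    have h : i = Q.length := by simpa using hQl.symm
    subst h
    rfl

instance finPair (m : ℕ) : Finite (Pair m) := Finite.of_equiv _ (ePair m).symm

lemma card_pair (m : ℕ) :
    Nat.card (Pair m) = ∑ i ∈ Finset.range (m + 1), dapCount i * eCount (m - i) := by
  rw [Nat.card_congr (ePair m)]
  letI : ∀ i : Fin (m + 1), Fintype (Dap (i : ℕ) × Emp (m - (i : ℕ))) :=
    fun i => Fintype.ofFinite _
  rw [Nat.card_eq_fintype_card, Fintype.card_sigma]
  rw [← Fin.sum_univ_eq_sum_range (fun i => dapCount i * eCount (m - i)) (m + 1)]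
  congr 1
  funext i
  rw [← Nat.card_eq_fintype_card, Nat.card_prod]
  rfl

lemma dapCount_zero : dapCount 0 = 0 := by
  have : IsEmpty (Dap 0) := by
    constructor
    rintro ⟨p, hp, hl⟩
    exact hp.1 (List.length_eq_zero_iff.mp hl)
  exact Nat.card_of_isEmpty

lemma dapCount_one : dapCount 1 = 0 := by
  have : IsEmpty (Dap 1) := by
    constructor
    rintro ⟨p, hp, hl⟩
    obtain ⟨t, rfl⟩ := head_one hp
    simp at hl
    subst hl
    have := hp.2.2.1
    simp at this
  exact Nat.card_of_isEmpty

lemma eCount_eq (n : ℕ) : eCount n = dapCount n + (if n = 0 then 1 else 0) := by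
  rcases eq_or_ne n 0 with rfl | hn
  · rw [dapCount_zero]
    haveI : Unique (Emp 0) := by
      refine ⟨⟨⟨[], Or.inl rfl, rfl⟩⟩, ?_⟩
      rintro ⟨p, hp, hl⟩
      exact Subtype.ext (List.length_eq_zero_iff.mp hl)
    simp [eCount, Nat.card_unique]
  · rw [if_neg hn, add_zero]
    unfold eCount dapCount
    apply Nat.card_congr
    apply Equiv.subtypeEquivRight
    intro p
    constructor
    · rintro ⟨h1 | h1, h2⟩
      · exfalso; rw [h1] at h2; simp at h2; omega
      · exact ⟨h1, h2⟩
    · rintro ⟨h1, h2⟩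
      exact ⟨Or.inr h1, h2⟩

lemma dap_rec (n : ℕ) : dapCount (n + 2) =
    (if n = 0 then 1 else 0) + dapCount n + dapCount (n + 1) +
      ∑ ij ∈ Finset.HasAntidiagonal.antidiagonal (n + 1), dapCount ij.1 * dapCount ij.2 := by
  have h1 : dapCount (n + 2) = eCount n + Nat.card (Pair (n + 1)) := by
    unfold dapCount
    rw [← Nat.card_eq_of_bijective (enc n) ⟨enc_inj n, enc_surj n⟩, Nat.card_sum]
    rfl
  rw [h1, card_pair, eCount_eq]
  have h2 : ∀ i ∈ Finset.range (n + 2), dapCount i * eCount (n + 1 - i) =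
      dapCount i * dapCount (n + 1 - i) + (if i = n + 1 then dapCount i else 0) := by
    intro i hi
    simp only [Finset.mem_range] at hi
    rw [eCount_eq, Nat.mul_add]
    congr 1
    rcases eq_or_ne i (n + 1) with rfl | h
    · rw [if_pos rfl, if_pos (by omega)]
      omega
    · rw [if_neg h, if_neg (by omega)]
      omega
  rw [Finset.sum_congr rfl h2, Finset.sum_add_distrib, Finset.sum_ite_eq' (Finset.range (n + 2))]
  rw [Finset.Nat.sum_antidiagonal_eq_sum_range_succ_mk (fun ij : ℕ × ℕ => dapCount ij.1 * dapCount ij.2)]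
  rw [if_pos (Finset.mem_range.mpr (by omega))]
  rw [show (n + 1).succ = n + 2 from rfl]
  dsimp only
  omega
theorem stmt3' : X * Aps ^ 2 + (X ^ 2 + X - 1) * Aps + X ^ 2 = 0 := by
  have hring : X * Aps ^ 2 + (X ^ 2 + X - 1) * Aps + X ^ 2 =
      X * (Aps * Aps) + X ^ 2 * Aps + X * Aps + X ^ 2 - Aps := by ring
  rw [hring]
  ext n
  rw [map_zero, map_sub, map_add, map_add, map_add]
  have hc : ∀ m, coeff m Aps = (dapCount m : ℚ) := fun m => coeff_mk m _
  rcases n with _ | _ | n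
  · rw [coeff_zero_eq_constantCoeff]
    simp [Aps, dapCount_zero]
  · have h1 : coeff 1 (X * (Aps * Aps)) = 0 := by
      rw [coeff_succ_X_mul, coeff_zero_eq_constantCoeff]
      simp [Aps, dapCount_zero]
    have h2 : coeff 1 (X ^ 2 * Aps) = 0 := by
      rw [coeff_X_pow_mul' Aps 2 1]
      simp
    have h3 : coeff 1 (X * Aps) = 0 := by
      rw [coeff_succ_X_mul, hc, dapCount_zero]
      simp
    have h4 : coeff 1 (X ^ 2 : PowerSeries ℚ) = 0 := by
      rw [coeff_X_pow]
      simp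
    rw [h1, h2, h3, h4, hc, dapCount_one]
    simp
  · have h1 : coeff (n + 2) (X * (Aps * Aps)) =
        ∑ ij ∈ Finset.HasAntidiagonal.antidiagonal (n + 1), (dapCount ij.1 : ℚ) * dapCount ij.2 := by
      rw [show n + 2 = (n + 1) + 1 from rfl, coeff_succ_X_mul, coeff_mul]
      exact Finset.sum_congr rfl fun ij _ => by rw [hc, hc]
    have h2 : coeff (n + 2) (X ^ 2 * Aps) = (dapCount n : ℚ) := by
      rw [coeff_X_pow_mul Aps 2 n, hc]
    have h3 : coeff (n + 2) (X * Aps) = (dapCount (n + 1) : ℚ) := by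
      rw [show n + 2 = (n + 1) + 1 from rfl, coeff_succ_X_mul, hc]
    have h4 : coeff (n + 2) (X ^ 2 : PowerSeries ℚ) = if n = 0 then 1 else 0 := by
      rw [coeff_X_pow]
      rcases eq_or_ne n 0 with rfl | h
      · simp
      · rw [if_neg (by omega), if_neg h]
    rw [h1, h2, h3, h4, hc]
    have := dap_rec n
    have hcast : (dapCount (n + 2) : ℚ) =
        (if n = 0 then (1 : ℚ) else 0) + dapCount n + dapCount (n + 1) +
          ∑ ij ∈ Finset.HasAntidiagonal.antidiagonal (n + 1), (dapCount ij.1 : ℚ) * dapCount ij.2 := by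
      rw [this]
      push_cast
      rcases eq_or_ne n 0 with rfl | h
      · simp
      · simp [h]
    rw [hcast]
    ring
end DAPwork

/-- `A(x)` satisfies `x A² + (x² + x - 1) A + x² = 0`
(equivalently `A = (1 - x - x² - √(x⁴-2x³-x²-2x+1))/(2x)`). -/
theorem stmt3 : X * Aps ^ 2 + (X ^ 2 + X - 1) * Aps + X ^ 2 = 0 :=
  DAPwork.stmt3'
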